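/- Let V be a finite-dimensional real inner product space and K : V × V → V a symmetric bilinear map with g(K(X,Y),Z) totally symmetric and [K,K] = 0. Then the commutative associative product X ∘ Y := K(X,Y) has a (two-sided) unit if and only if K is non-degenerate, i.e., the linear map X ↦ K_X is injective. -/

import Mathlib

open scoped RealInnerProductSpace

open Polynomial in
private lemma aeval_eig_aux {V : Type*} [NormedAddCommGroup V] [InnerProductSpace ℝ V]
    (S : V →ₗ[ℝ] V) (v : V) (μ : ℝ) (h : S v = μ • v) (p : ℝ[X]) :
    (Polynomial.aeval S p) v = p.eval μ • v := by
  have hpow : ∀ k : ℕ, (S ^ k) v = μ ^ k • v := by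
    intro k
    induction k with
    | zero => simp
    | succ k ih =>
        simp [pow_succ, Module.End.mul_apply, h, ih, smul_smul, mul_comm]
  induction p using Polynomial.induction_on' with
  | add p q hp hq => simp [hp, hq, add_smul]
  | monomial k a =>
      simp [aeval_monomial, Module.End.mul_apply, hpow, Module.algebraMap_end_apply, smul_smul,
        mul_comm]

/-- on a statistical vector space with `[K,K] = 0`, the product
`X ∘ Y := K(X,Y)` has a (two-sided) unit iff `K` is non-degenerate, i.e. the
linear map `X ↦ K_X` is injective. -/
theorem stmt_8 {V : Type*} [NormedAddCommGroup V] [InnerProductSpace ℝ V]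
    [FiniteDimensional ℝ V] (K : V →ₗ[ℝ] V →ₗ[ℝ] V)
    (hKcomm : ∀ X Y : V, K X Y = K Y X)
    (hCsym : ∀ X Y Z : V, ⟪K X Y, Z⟫ = ⟪K X Z, Y⟫)
    (hKK : ∀ X Y Z : V, K X (K Y Z) = K Y (K X Z)) :
    (∃ e : V, ∀ X : V, K e X = X ∧ K X e = X)
      ↔ Function.Injective fun X : V => K X := by
  classical
  constructor
  · rintro ⟨e, he⟩ X Y hXY
    rw [← (he X).2, ← (he Y).2]
    exact LinearMap.congr_fun hXY e
  · intro hinj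
    have hmul : ∀ X Y : V, K X * K Y = K (K X Y) := by
      intro X Y
      ext Z
      simp only [Module.End.mul_apply]
      rw [hKcomm (K X Y) Z, ← hKK X Z Y, hKcomm Z Y]
    have hcomm : ∀ X Y : V, K X * K Y = K Y * K X := by
      intro X Y
      ext Z
      simpa only [Module.End.mul_apply] using hKK X Y Z
    have hpow : ∀ (X : V) (k : ℕ), ∃ Y, K Y = K X ^ (k + 1) := by
      intro X k
      induction k with
      | zero => exact ⟨X, by simp⟩
      | succ k ih =>
          obtain ⟨Y, hY⟩ := ih
          exact ⟨K X Y, by rw [← hmul, hY, ← pow_succ']⟩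
    have hsmul : ∀ (X : V) (p : Polynomial ℝ), ∃ Y, K Y = K X * Polynomial.aeval (K X) p := by
      intro X p
      induction p using Polynomial.induction_on' with
      | add p q hp hq =>
          obtain ⟨Y₁, h₁⟩ := hp
          obtain ⟨Y₂, h₂⟩ := hq
          exact ⟨Y₁ + Y₂, by rw [map_add, h₁, h₂, map_add, mul_add]⟩
      | monomial k a =>
          obtain ⟨Y, hY⟩ := hpow X k
          refine ⟨a • Y, ?_⟩
          rw [map_smul, hY, Polynomial.aeval_monomial, Algebra.algebraMap_eq_smul_one,
            smul_mul_assoc, one_mul, mul_smul_comm, ← pow_succ']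
    -- for each `X` there is an idempotent `P` in the range of `K` with `P * K X = K X`
    have hproj : ∀ X : V, ∃ P : V →ₗ[ℝ] V, (∃ Y, K Y = P) ∧ P * P = P ∧ P * K X = K X := by
      intro X
      have hSsym : (K X).IsSymmetric := by
        intro u w
        rw [hCsym X u w]
        exact real_inner_comm _ _
      obtain ⟨n, hn⟩ : ∃ n, Module.finrank ℝ V = n := ⟨_, rfl⟩
      set b := hSsym.eigenvectorBasis hn with hb
      set μ := hSsym.eigenvalues hn with hμ
      have heig : ∀ i, K X (b i) = μ i • b i := fun i => by
        exact hSsym.apply_eigenvectorBasis hn i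
      set s : Finset ℝ := insert 0 (Finset.image μ Finset.univ) with hs
      set f : ℝ → ℝ := fun t => if t = 0 then 0 else 1 with hf
      set r : Polynomial ℝ := Lagrange.interpolate s id f with hr
      have hrnode : ∀ t ∈ s, r.eval t = f t := fun t ht => by
        rw [hr]; exact Lagrange.eval_interpolate_at_node f (Set.injOn_id _) ht
      have hμs : ∀ i, μ i ∈ s := fun i =>
        Finset.mem_insert_of_mem (Finset.mem_image_of_mem μ (Finset.mem_univ i))
      set P : V →ₗ[ℝ] V := Polynomial.aeval (K X) r with hP
      have hPb : ∀ i, P (b i) = f (μ i) • b i := fun i => by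
        rw [hP, aeval_eig_aux (K X) (b i) (μ i) (heig i), hrnode _ (hμs i)]
      refine ⟨P, ?_, ?_, ?_⟩
      · have h0 : r.coeff 0 = 0 := by
          rw [Polynomial.coeff_zero_eq_eval_zero, hrnode 0 (Finset.mem_insert_self 0 _)]
          simp [hf]
        obtain ⟨q, hq⟩ := (Polynomial.X_dvd_iff).2 h0
        obtain ⟨Y, hY⟩ := hsmul X q
        exact ⟨Y, by rw [hY, hP, hq, map_mul, Polynomial.aeval_X]⟩
      · apply b.toBasis.ext
        intro i
        simp only [OrthonormalBasis.coe_toBasis, Module.End.mul_apply, hPb, map_smul, smul_smul]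
        congr 1
        by_cases h : μ i = 0 <;> simp [hf, h]
      · apply b.toBasis.ext
        intro i
        simp only [OrthonormalBasis.coe_toBasis, Module.End.mul_apply, heig, map_smul, hPb,
          smul_smul]
        by_cases h : μ i = 0 <;> simp [hf, h]
    -- join the idempotents over a list of vectors
    have hjoin : ∀ l : List V, ∃ P : V →ₗ[ℝ] V, (∃ Y, K Y = P) ∧ P * P = P ∧
        ∀ X ∈ l, P * K X = K X := by
      intro l
      induction l with
      | nil => exact ⟨0, ⟨0, by simp⟩, by simp, by simp⟩
      | cons X l ih =>
          obtain ⟨P, ⟨Y₁, hY₁⟩, hPP, hPl⟩ := ih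
          obtain ⟨Q, ⟨Y₂, hY₂⟩, hQQ, hQX⟩ := hproj X
          have hc : P * Q = Q * P := by rw [← hY₁, ← hY₂, hcomm]
          refine ⟨P + Q - P * Q, ⟨Y₁ + Y₂ - K Y₁ Y₂, ?_⟩, ?_, ?_⟩
          · rw [map_sub, map_add, ← hmul, hY₁, hY₂]
          · have e1 : P * (P * Q) = P * Q := by rw [← mul_assoc, hPP]
            have e2 : Q * (P * Q) = P * Q := by rw [← mul_assoc, ← hc, mul_assoc, hQQ]
            have e3 : (P * Q) * P = P * Q := by rw [mul_assoc, ← hc, ← mul_assoc, hPP]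
            have e4 : (P * Q) * Q = P * Q := by rw [mul_assoc, hQQ]
            have e5 : (P * Q) * (P * Q) = P * Q := by rw [← mul_assoc, e3, e4]
            simp only [sub_mul, mul_sub, add_mul, mul_add, hPP, hQQ, e1, e2, e3, e4, e5, ← hc]
            abel
          · intro Z hZ
            rcases List.mem_cons.mp hZ with h | h
            · subst h
              have h2 : (P * Q) * K Z = P * K Z := by rw [mul_assoc, hQX]
              rw [sub_mul, add_mul, h2, hQX]
              abel
            · have h1 := hPl Z h
              have h2 : (P * Q) * K Z = Q * K Z := by rw [hc, mul_assoc, h1]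
              rw [sub_mul, add_mul, h1, h2]
              abel
    obtain ⟨P, ⟨e, hKe⟩, hPP, hPl⟩ := hjoin (List.ofFn (Module.finBasis ℝ V))
    have hbasis : ∀ i, P * K (Module.finBasis ℝ V i) = K (Module.finBasis ℝ V i) := fun i =>
      hPl _ (by simp [List.mem_ofFn])
    have hallmap : (LinearMap.mulLeft ℝ P).comp K = K := by
      apply Module.Basis.ext (Module.finBasis ℝ V)
      intro i
      simpa [LinearMap.mulLeft_apply] using hbasis i
    have hall : ∀ X : V, P * K X = K X := fun X => by
      simpa [LinearMap.mulLeft_apply] using LinearMap.congr_fun hallmap X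
    refine ⟨e, fun X => ?_⟩
    have h1 : K (K e X) = K X := by rw [← hmul, hKe, hall X]
    have h2 : K e X = X := hinj h1
    exact ⟨h2, by rw [hKcomm]; exact h2⟩
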